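/- arXiv:2009.13870 — 2 statements merged into one kernel-verified Lean document; each statement's English description precedes it below -/
import Mathlib

section
/- Let V be a ℚ-vector space regarded as an additive abelian group, S an abelian group (written multiplicatively), and f : S → V a surjective group homomorphism. Assume every element x ∈ S admits a coherent system of roots, i.e. a function (x_n)_{n ≥ 1} in S with x_1 = x and (x_{kl})^k = x_l for all k, l ≥ 1. Then for every finitely generated subgroup G ≤ V and every group homomorphism s : G → S with f ∘ s = id_G, there exists a group homomorphism s' : V → S extending s with f ∘ s' = id_V. -/
private lemma root_cast {A : Type*} [AddCommGroup A] (r : ℕ+ → A)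
    (hr : ∀ k l : ℕ+, (k : ℕ) • r (k * l) = r l) :
    ∀ (a a' : ℤ) (b b' : ℕ+), a * ((b' : ℕ) : ℤ) = a' * ((b : ℕ) : ℤ) →
      a • r b = a' • r b' := by
  intro a a' b b' h
  have h1 : r b = ((b' : ℕ) : ℤ) • r (b' * b) := by
    rw [natCast_zsmul]; exact (hr b' b).symm
  have h2 : r b' = ((b : ℕ) : ℤ) • r (b' * b) := by
    rw [natCast_zsmul, mul_comm b' b]; exact (hr b b').symm
  rw [h1, h2, smul_smul, smul_smul, h]

private lemma exists_rootHom {A V : Type*} [AddCommGroup A] [AddCommGroup V] [Module ℚ V]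
    (F : A →+ V) (r : ℕ+ → A) (hr : ∀ k l : ℕ+, (k : ℕ) • r (k * l) = r l) :
    ∃ h : ℚ →+ A, h 1 = r 1 ∧ ∀ q : ℚ, F (h q) = q • F (r 1) := by
  have key := root_cast r hr
  set h0 : ℚ → A := fun q => q.num • r ⟨q.den, q.pos⟩ with hh0
  have hadd : ∀ p q : ℚ, h0 (p + q) = h0 p + h0 q := by
    intro p q
    have bp : ℕ+ := ⟨p.den, p.pos⟩
    have e1 : h0 p = (p.num * (q.den : ℤ)) • r (⟨p.den, p.pos⟩ * ⟨q.den, q.pos⟩) := by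
      apply key
      show p.num * ((p.den * q.den : ℕ) : ℤ) = p.num * (q.den : ℤ) * ((p.den : ℕ) : ℤ)
      push_cast; ring
    have e2 : h0 q = (q.num * (p.den : ℤ)) • r (⟨p.den, p.pos⟩ * ⟨q.den, q.pos⟩) := by
      apply key
      show q.num * ((p.den * q.den : ℕ) : ℤ) = q.num * (p.den : ℤ) * ((q.den : ℕ) : ℤ)
      push_cast; ring
    have e3 : h0 (p + q) = (p.num * (q.den : ℤ) + q.num * (p.den : ℤ)) •
        r (⟨p.den, p.pos⟩ * ⟨q.den, q.pos⟩) := by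
      apply key
      have hq : ((p+q).num : ℚ) * ((p.den : ℕ) * (q.den : ℕ) : ℤ) =
          ((p.num * (q.den : ℤ) + q.num * (p.den : ℤ)) : ℤ) * ((p+q).den : ℕ) := by
        push_cast
        rw [← Rat.mul_den_eq_num (p+q), ← Rat.mul_den_eq_num p, ← Rat.mul_den_eq_num q]
        ring
      show (p+q).num * ((p.den * q.den : ℕ) : ℤ) =
        (p.num * (q.den : ℤ) + q.num * (p.den : ℤ)) * ((p+q).den : ℤ)
      exact_mod_cast hq
    rw [e1, e2, e3, add_smul]
  refine ⟨AddMonoidHom.mk' h0 hadd, ?_, ?_⟩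
  · show h0 1 = r 1
    simp only [hh0, Rat.num_one, Rat.den_one, one_zsmul]
    congr 1
  · intro q
    show F (h0 q) = q • F (r 1)
    have hd : F (r 1) = ((q.den : ℕ) : ℚ) • F (r ⟨q.den, q.pos⟩) := by
      rw [Nat.cast_smul_eq_nsmul, ← map_nsmul]
      congr 1
      have := hr ⟨q.den, q.pos⟩ 1
      exact this.symm.trans (congrArg (fun t => (q.den : ℕ) • r t) (mul_one (⟨q.den, q.pos⟩ : ℕ+)))
    rw [hh0, map_zsmul, hd, smul_smul]
    rw [← Int.cast_smul_eq_zsmul ℚ]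
    congr 1
    rw [← Rat.mul_den_eq_num]

theorem extend_section (V : Type*) [AddCommGroup V] [Module ℚ V]
    (S : Type*) [CommGroup S] (f : S → V)
    (hf_hom : ∀ x y : S, f (x * y) = f x + f y)
    (hf_surj : Function.Surjective f)
    (hroots : ∀ x : S, ∃ r : ℕ+ → S, r 1 = x ∧
      ∀ k l : ℕ+, (r (k * l)) ^ (k : ℕ) = r l)
    (G : AddSubgroup V) (hG : G.FG)
    (s : G → S) (hs_hom : ∀ g g' : G, s (g + g') = s g * s g')
    (hs_sec : ∀ g : G, f (s g) = (g : V)) :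
    ∃ s' : V → S,
      (∀ v w : V, s' (v + w) = s' v * s' w) ∧
      (∀ g : G, s' (g : V) = s g) ∧
      (∀ v : V, f (s' v) = v) := by
  classical
  -- additive reformulation
  let A := Additive S
  let F : A →+ V := AddMonoidHom.mk' (fun a => f a.toMul) (fun a b => hf_hom _ _)
  have hFsurj : Function.Surjective F := hf_surj
  have hrootsA : ∀ a : A, ∃ h : ℚ →+ A, h 1 = a ∧ ∀ q : ℚ, F (h q) = q • F a := by
    intro a
    obtain ⟨r, hr1, hrk⟩ := hroots a.toMul
    have hr' : ∀ k l : ℕ+, (k : ℕ) • (Additive.ofMul (r (k * l))) = Additive.ofMul (r l) := by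
      intro k l
      rw [← ofMul_pow]
      exact congrArg Additive.ofMul (hrk k l)
    obtain ⟨h, h1, h2⟩ := exists_rootHom F (fun n => Additive.ofMul (r n)) hr'
    refine ⟨h, ?_, ?_⟩
    · rw [h1]; exact congrArg Additive.ofMul hr1
    · intro q
      have : Additive.ofMul (r 1) = a := congrArg Additive.ofMul hr1
      rw [h2, this]
  -- free ℤ-module structure on G
  let M : Submodule ℤ V := AddSubgroup.toIntSubmodule G
  let sM : M →+ A := AddMonoidHom.mk' (fun x => Additive.ofMul (s ⟨x.1, x.2⟩))
    (fun x y => congrArg Additive.ofMul (hs_hom ⟨x.1, x.2⟩ ⟨y.1, y.2⟩))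
  have hMfg : M.FG := by
    rw [Submodule.fg_iff_addSubgroup_fg]
    simpa [M, AddSubgroup.toIntSubmodule_toAddSubgroup] using hG
  haveI : Module.Finite ℤ M := Module.Finite.iff_fg.mpr hMfg
  haveI : IsAddTorsionFree V := .of_module_rat _
  haveI : Module.Free ℤ M := Module.free_of_finite_type_torsion_free'
  let b : Module.Basis (Module.Free.ChooseBasisIndex ℤ M) ℤ M := Module.Free.chooseBasis ℤ M
  let v : Module.Free.ChooseBasisIndex ℤ M → V := fun i => (b i : V)
  have hvInd : LinearIndependent ℤ v :=
    b.linearIndependent.map' M.subtype (Submodule.ker_subtype M)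
  have hvQ : LinearIndependent ℚ v := (LinearIndependent.iff_fractionRing ℤ ℚ).mp hvInd
  have hvQ' := hvQ.linearIndepOn_id
  let J : Set V := hvQ'.extend (Set.subset_univ (Set.range v))
  have hJsub : Set.range v ⊆ J := hvQ'.subset_extend _
  let B : Module.Basis J ℚ V := Module.Basis.extend hvQ'
  have hBx : ∀ x : J, B x = (x : V) := fun x => Module.Basis.extend_apply_self hvQ' x
  -- lifts with coherent roots
  let a : J → A := fun x => if h : (x : V) ∈ G then sM ⟨x, h⟩ else Classical.choose (hFsurj (x : V))
  have hFa : ∀ x : J, F (a x) = (x : V) := by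
    intro x
    by_cases h : (x : V) ∈ G
    · simp only [a, dif_pos h]
      exact hs_sec ⟨x, h⟩
    · simp only [a, dif_neg h]
      exact Classical.choose_spec (hFsurj (x : V))
  choose hfun h1 h2 using fun x : J => hrootsA (a x)
  let Φ : (J →₀ ℚ) →+ A := Finsupp.liftAddHom hfun
  let Φ' : V →+ A := Φ.comp B.repr.toLinearMap.toAddMonoidHom
  -- section property
  have hsec : ∀ w : V, F (Φ' w) = w := by
    intro w
    have : F (Φ' w) = (B.repr w).sum fun j q => q • (j : V) := by
      show F (Φ (B.repr w)) = _
      rw [Finsupp.liftAddHom_apply, map_finsuppSum]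
      exact Finsupp.sum_congr fun j _ => by rw [h2, hFa]
    rw [this]
    have := B.linearCombination_repr w
    rw [Finsupp.linearCombination_apply] at this
    calc ((B.repr w).sum fun j q => q • (j : V))
        = (B.repr w).sum fun j q => q • B j := Finsupp.sum_congr fun j _ => by rw [hBx]
      _ = w := this
  -- agreement with s on G
  have hkey : ∀ x : M, Φ' (x : V) = sM x := by
    have heq : (Φ'.comp M.subtype.toAddMonoidHom).toIntLinearMap = sM.toIntLinearMap := by
      apply b.ext
      intro i
      show Φ' (v i) = sM (b i)
      have hJi : v i ∈ J := hJsub (Set.mem_range_self i)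
      have hrepr : B.repr (v i) = Finsupp.single (⟨v i, hJi⟩ : J) 1 := by
        conv_lhs => rw [show v i = B ⟨v i, hJi⟩ from (hBx ⟨v i, hJi⟩).symm]
        exact B.repr_self _
      show Φ (B.repr (v i)) = sM (b i)
      rw [hrepr]
      have : Φ (Finsupp.single (⟨v i, hJi⟩ : J) 1) = hfun ⟨v i, hJi⟩ 1 :=
        Finsupp.liftAddHom_apply_single hfun _ _
      rw [this, h1]
      have hmem : v i ∈ G := (b i).2
      simp only [a, dif_pos hmem]
      rfl
    intro x
    exact DFunLike.congr_fun heq x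
  -- conclusion
  refine ⟨fun w => (Φ' w).toMul, ?_, ?_, ?_⟩
  · intro w1 w2
    show (Φ' (w1 + w2)).toMul = (Φ' w1).toMul * (Φ' w2).toMul
    rw [map_add]
    rfl
  · intro g
    have := hkey ⟨g.1, g.2⟩
    exact congrArg Additive.toMul this
  · intro w
    exact hsec w
end

section
/- Let V be a ℚ-vector space, S an abelian group, and f : S → V a surjective group homomorphism such that every element of S admits a coherent system of roots. Then S is isomorphic as a group to (ker f) × V. -/
section Aux
variable {S : Type*} [CommGroup S]

private lemma root_pow_eq' (r : ℕ+ → S)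
    (hr : ∀ k l : ℕ+, (r (k * l)) ^ (k : ℕ) = r l)
    (n n' : ℕ+) (a a' : ℤ) (h : a * ((n' : ℕ) : ℤ) = a' * ((n : ℕ) : ℤ)) :
    (r n) ^ a = (r n') ^ a' := by
  have h1 : (r (n * n')) ^ (((n' : ℕ) : ℤ)) = r n := by
    rw [zpow_natCast, mul_comm]; exact hr n' n
  have h2 : (r (n * n')) ^ (((n : ℕ) : ℤ)) = r n' := by
    rw [zpow_natCast]; exact hr n n'
  calc (r n) ^ a = ((r (n * n')) ^ (((n' : ℕ) : ℤ))) ^ a := by rw [h1]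
    _ = (r (n * n')) ^ ((((n' : ℕ) : ℤ)) * a) := (zpow_mul _ _ _).symm
    _ = (r (n * n')) ^ ((((n : ℕ) : ℤ)) * a') := by
        rw [show ((((n' : ℕ) : ℤ)) * a) = (((n : ℕ) : ℤ)) * a' from by linarith]
    _ = ((r (n * n')) ^ (((n : ℕ) : ℤ))) ^ a' := zpow_mul _ _ _
    _ = (r n') ^ a' := by rw [h2]

private noncomputable def rootHom (r : ℕ+ → S) : ℚ → S :=
  fun q => (r ⟨q.den, q.pos⟩) ^ q.num

private lemma num_mul_den' (q : ℚ) : (q.num : ℚ) = q * q.den := by field_simp; exact (Rat.mul_den_eq_num q).symm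

private lemma rootHom_add (r : ℕ+ → S)
    (hr : ∀ k l : ℕ+, (r (k * l)) ^ (k : ℕ) = r l) (q1 q2 : ℚ) :
    rootHom r (q1 + q2) = rootHom r q1 * rootHom r q2 := by
  have key : (q1 + q2).num * ((((⟨q1.den, q1.pos⟩ * ⟨q2.den, q2.pos⟩ : ℕ+) : ℕ)) : ℤ)
      = (q1.num * q2.den + q2.num * q1.den) * ((((⟨(q1 + q2).den, (q1 + q2).pos⟩ : ℕ+) : ℕ)) : ℤ) := by
    simp only [PNat.mul_coe, PNat.mk_coe]
    have h0 : (((q1 + q2).num * (q1.den * q2.den) : ℤ) : ℚ)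
        = (((q1.num * q2.den + q2.num * q1.den) * (q1 + q2).den : ℤ) : ℚ) := by
      push_cast
      rw [num_mul_den' q1, num_mul_den' q2, num_mul_den' (q1 + q2)]
      ring
    exact_mod_cast h0
  have step1 : rootHom r (q1 + q2)
      = (r (⟨q1.den, q1.pos⟩ * ⟨q2.den, q2.pos⟩)) ^ (q1.num * q2.den + q2.num * q1.den) :=
    root_pow_eq' r hr _ _ _ _ key
  have e1 : (r (⟨q1.den, q1.pos⟩ * ⟨q2.den, q2.pos⟩ : ℕ+)) ^ (q1.num * (q2.den : ℤ))
      = (r ⟨q1.den, q1.pos⟩) ^ q1.num :=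
    root_pow_eq' r hr _ _ _ _ (by simp only [PNat.mul_coe, PNat.mk_coe]; push_cast; show _ = _ * (((q1.den * q2.den : ℕ)) : ℤ); push_cast; ring)
  have e2 : (r (⟨q1.den, q1.pos⟩ * ⟨q2.den, q2.pos⟩ : ℕ+)) ^ (q2.num * (q1.den : ℤ))
      = (r ⟨q2.den, q2.pos⟩) ^ q2.num :=
    root_pow_eq' r hr _ _ _ _ (by simp only [PNat.mul_coe, PNat.mk_coe]; push_cast; show _ = _ * (((q1.den * q2.den : ℕ)) : ℤ); push_cast; ring)
  rw [show rootHom r q1 * rootHom r q2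
      = (r ⟨q1.den, q1.pos⟩) ^ q1.num * (r ⟨q2.den, q2.pos⟩) ^ q2.num from rfl,
    step1, zpow_add, e1, e2]

private lemma rootHom_one (r : ℕ+ → S) : rootHom r 1 = r 1 := by
  show (r ⟨(1:ℚ).den, _⟩) ^ (1:ℚ).num = r 1
  norm_num

variable {V : Type*} [AddCommGroup V] [Module ℚ V]

private lemma rootHom_f (f : S →* Multiplicative V) (r : ℕ+ → S)
    (hr : ∀ k l : ℕ+, (r (k * l)) ^ (k : ℕ) = r l) (q : ℚ) :
    Multiplicative.toAdd (f (rootHom r q))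
      = q • Multiplicative.toAdd (f (r 1)) := by
  show Multiplicative.toAdd (f ((r ⟨q.den, q.pos⟩) ^ q.num)) = _
  set n : ℕ+ := ⟨q.den, q.pos⟩ with hn
  have h1 : (r n) ^ ((n : ℕ)) = r 1 := by simpa using hr n 1
  have h2 : ((n : ℕ) : ℚ) • Multiplicative.toAdd (f (r n)) = Multiplicative.toAdd (f (r 1)) := by
    rw [Nat.cast_smul_eq_nsmul, ← toAdd_pow, ← map_pow, h1]
  have hne : (((n : ℕ) : ℚ)) ≠ 0 := by exact_mod_cast n.ne_zero
  have h3 : Multiplicative.toAdd (f (r n))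
      = (((n : ℕ) : ℚ))⁻¹ • Multiplicative.toAdd (f (r 1)) := by
    rw [eq_inv_smul_iff₀ hne, h2]
  calc Multiplicative.toAdd (f ((r n) ^ q.num))
      = q.num • Multiplicative.toAdd (f (r n)) := by rw [← toAdd_zpow, ← map_zpow]
    _ = (q.num : ℚ) • Multiplicative.toAdd (f (r n)) := by rw [Int.cast_smul_eq_zsmul]
    _ = ((q.num : ℚ) * (((n : ℕ) : ℚ))⁻¹) • Multiplicative.toAdd (f (r 1)) := by
        rw [h3, smul_smul]
    _ = q • Multiplicative.toAdd (f (r 1)) := by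
        congr 1
        rw [← div_eq_mul_inv]
        exact_mod_cast q.num_div_den

end Aux

theorem split_via_coherent_roots (V : Type*) [AddCommGroup V] [Module ℚ V]
    (S : Type*) [CommGroup S] (f : S →* Multiplicative V)
    (hf_surj : Function.Surjective f)
    (hroots : ∀ x : S, ∃ r : ℕ+ → S, r 1 = x ∧
      ∀ k l : ℕ+, (r (k * l)) ^ (k : ℕ) = r l) :
    Nonempty (S ≃* f.ker × Multiplicative V) := by
  classical
  -- choose a basis of V
  set B := Module.Basis.ofVectorSpace ℚ V with hB
  -- for each basis vector choose a preimage with coherent roots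
  have hx : ∀ i : Module.Basis.ofVectorSpaceIndex ℚ V,
      ∃ r : ℕ+ → S, f (r 1) = Multiplicative.ofAdd (B i) ∧
        ∀ k l : ℕ+, (r (k * l)) ^ (k : ℕ) = r l := by
    intro i
    obtain ⟨x, hxf⟩ := hf_surj (Multiplicative.ofAdd (B i))
    obtain ⟨r, hr1, hr⟩ := hroots x
    exact ⟨r, by rw [hr1, hxf], hr⟩
  choose r hrf hr using hx
  -- per-basis-vector homomorphisms ℚ →+ Additive S
  let φ : Module.Basis.ofVectorSpaceIndex ℚ V → (ℚ →+ Additive S) := fun i =>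
    AddMonoidHom.mk' (fun q => Additive.ofMul (rootHom (r i) q))
      (fun a b => congrArg Additive.ofMul (rootHom_add (r i) (hr i) a b))
  -- section of f as an additive hom V →+ Additive S
  let t : V →+ Additive S :=
    (Finsupp.liftAddHom φ).comp
      ((B.repr : V ≃ₗ[ℚ] (Module.Basis.ofVectorSpaceIndex ℚ V →₀ ℚ)).toLinearMap.toAddMonoidHom)
  let sec : V → S := fun v => Additive.toMul (t v)
  have hsec_add : ∀ v w : V, sec (v + w) = sec v * sec w := by
    intro v w
    show Additive.toMul (t (v + w)) = _
    rw [map_add]; rfl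
  -- f ∘ sec = ofAdd
  let F : Additive S →+ V := AddMonoidHom.mk'
      (fun a => Multiplicative.toAdd (f (Additive.toMul a)))
      (fun a b => by simp [map_mul])
  have hFφ : ∀ i q, F (φ i q) = q • B i := by
    intro i q
    show Multiplicative.toAdd (f (rootHom (r i) q)) = q • B i
    rw [rootHom_f f (r i) (hr i) q, hrf i]
    simp
  have hsec_f : ∀ v : V, f (sec v) = Multiplicative.ofAdd v := by
    intro v
    have : F (t v) = v := by
      show F ((Finsupp.liftAddHom φ) (B.repr v)) = v
      rw [Finsupp.liftAddHom_apply, map_finsuppSum]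
      simp only [hFφ]
      exact B.linearCombination_repr v
    have h' : Multiplicative.toAdd (f (sec v)) = v := this
    conv_rhs => rw [← h']
    simp
  -- the splitting isomorphism
  refine ⟨MulEquiv.mk' (Equiv.mk
    (fun x => (⟨x * (sec (Multiplicative.toAdd (f x)))⁻¹, ?_⟩, f x))
    (fun p => (p.1 : S) * sec (Multiplicative.toAdd p.2)) ?_ ?_) ?_⟩
  · rw [MonoidHom.mem_ker, map_mul, map_inv, hsec_f]
    simp
  · intro x
    simp [mul_assoc]
  · rintro ⟨k, v⟩
    have hk : f (k : S) = 1 := MonoidHom.mem_ker.mp k.2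
    have hfx : f ((k : S) * sec (Multiplicative.toAdd v)) = v := by
      rw [map_mul, hk, hsec_f]
      simp
    refine Prod.ext (Subtype.ext ?_) hfx
    show (k : S) * sec (Multiplicative.toAdd v) * (sec (Multiplicative.toAdd (f _)))⁻¹ = (k : S)
    rw [hfx]
    simp [mul_assoc]
  · intro x y
    refine Prod.ext (Subtype.ext ?_) (map_mul f x y)
    show x * y * (sec (Multiplicative.toAdd (f (x * y))))⁻¹
      = (x * (sec (Multiplicative.toAdd (f x)))⁻¹) * (y * (sec (Multiplicative.toAdd (f y)))⁻¹)
    rw [map_mul, toAdd_mul, hsec_add, mul_inv]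
    exact mul_mul_mul_comm x y _ _
end
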